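/- Let n, m_a, m_b be positive integers and let a, b : Fin n → ℤ. Suppose there are sets S₁, …, S_{m_a} ⊆ Fin n whose union is Fin n such that a is non-increasing on each S_i, and sets T₁, …, T_{m_b} ⊆ Fin n whose union is Fin n such that b is non-decreasing on each T_j. Then for every k with 0 ≤ k ≤ 2n−2: c_k = min over all pairs (i, j) such that L(i,j,k) = {ℓ ∈ S_i : 0 ≤ k−ℓ ≤ n−1 and k−ℓ ∈ T_j} is nonempty of (a ℓ* + b (k−ℓ*)), where ℓ* is the maximum element of L(i,j,k) and c is the (min,+) convolution of a and b. -/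
import Mathlib


theorem minplus_conv_via_max_witnesses
    (n ma mb : ℕ) (hn : 0 < n) (hma : 0 < ma) (hmb : 0 < mb)
    (a b : Fin n → ℤ)
    (S : Fin ma → Finset (Fin n)) (T : Fin mb → Finset (Fin n))
    (hScover : ∀ ℓ : Fin n, ∃ i : Fin ma, ℓ ∈ S i)
    (hTcover : ∀ ℓ : Fin n, ∃ j : Fin mb, ℓ ∈ T j)
    (hSmono : ∀ i : Fin ma, ∀ ℓ ∈ S i, ∀ ℓ' ∈ S i, ℓ ≤ ℓ' → a ℓ ≥ a ℓ')
    (hTmono : ∀ j : Fin mb, ∀ ℓ ∈ T j, ∀ ℓ' ∈ T j, ℓ ≤ ℓ' → b ℓ ≤ b ℓ')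
    (k : ℕ) (hk : k ≤ 2 * n - 2)
    (L : Fin ma → Fin mb → Finset (Fin n))
    (hLdef : ∀ (i : Fin ma) (j : Fin mb),
      L i j = (S i).filter fun ℓ : Fin n =>
        (ℓ : ℕ) ≤ k ∧ ∃ t : Fin n, (t : ℕ) = k - (ℓ : ℕ) ∧ t ∈ T j)
    (hD : (Finset.univ.filter fun ℓ : Fin n =>
        (ℓ : ℕ) ≤ k ∧ k - (ℓ : ℕ) < n).Nonempty)
    (hP : (Finset.univ.filter fun p : Fin ma × Fin mb =>
        (L p.1 p.2).Nonempty).Nonempty) :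
    ((Finset.univ.filter fun ℓ : Fin n =>
          (ℓ : ℕ) ≤ k ∧ k - (ℓ : ℕ) < n).inf' hD fun ℓ =>
        if h : k - (ℓ : ℕ) < n then a ℓ + b ⟨k - (ℓ : ℕ), h⟩ else 0)
      = (Finset.univ.filter fun p : Fin ma × Fin mb =>
            (L p.1 p.2).Nonempty).inf' hP
          (fun p => if h : (L p.1 p.2).Nonempty then
              (if h' : k - (((L p.1 p.2).max' h : Fin n) : ℕ) < n then
                a ((L p.1 p.2).max' h) +
                  b ⟨k - (((L p.1 p.2).max' h : Fin n) : ℕ), h'⟩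
              else 0)
            else 0) := by
  apply le_antisymm
  · apply Finset.le_inf'
    intro p hp
    rcases Finset.mem_filter.mp hp with ⟨-, hne⟩
    have hmem : (L p.1 p.2).max' hne ∈ (S p.1).filter fun ℓ : Fin n =>
        (ℓ : ℕ) ≤ k ∧ ∃ t : Fin n, (t : ℕ) = k - (ℓ : ℕ) ∧ t ∈ T p.2 := by
      rw [← hLdef]; exact Finset.max'_mem _ _
    rcases Finset.mem_filter.mp hmem with ⟨hS, hle, t, ht, htT⟩
    have hlt : k - (((L p.1 p.2).max' hne : Fin n) : ℕ) < n := ht ▸ t.isLt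
    have hD' : (L p.1 p.2).max' hne ∈ Finset.univ.filter
        fun ℓ : Fin n => (ℓ : ℕ) ≤ k ∧ k - (ℓ : ℕ) < n :=
      Finset.mem_filter.mpr ⟨Finset.mem_univ _, hle, hlt⟩
    refine le_trans (Finset.inf'_le _ hD') ?_
    rw [dif_pos hne, dif_pos hlt]
  · apply Finset.le_inf'
    intro ℓ hℓ
    rcases Finset.mem_filter.mp hℓ with ⟨-, hle, hlt⟩
    obtain ⟨i, hi⟩ := hScover ℓ
    obtain ⟨j, hj⟩ := hTcover ⟨k - (ℓ : ℕ), hlt⟩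
    have hℓL : ℓ ∈ L i j := by
      rw [hLdef]
      exact Finset.mem_filter.mpr ⟨hi, hle, ⟨⟨k - (ℓ : ℕ), hlt⟩, rfl, hj⟩⟩
    have hne : (L i j).Nonempty := ⟨ℓ, hℓL⟩
    have hpP : (i, j) ∈ Finset.univ.filter
        fun p : Fin ma × Fin mb => (L p.1 p.2).Nonempty :=
      Finset.mem_filter.mpr ⟨Finset.mem_univ _, hne⟩
    refine le_trans (Finset.inf'_le _ hpP) ?_
    have hmem : (L i j).max' hne ∈ (S i).filter fun ℓ : Fin n =>
        (ℓ : ℕ) ≤ k ∧ ∃ t : Fin n, (t : ℕ) = k - (ℓ : ℕ) ∧ t ∈ T j := by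
      rw [← hLdef]; exact Finset.max'_mem _ _
    rcases Finset.mem_filter.mp hmem with ⟨hS, hle', t, ht, htT⟩
    have hlt' : k - (((L i j).max' hne : Fin n) : ℕ) < n := ht ▸ t.isLt
    have hge : ℓ ≤ (L i j).max' hne := Finset.le_max' _ _ hℓL
    simp only [dif_pos hne, dif_pos hlt', dif_pos hlt]
    have ha : a ((L i j).max' hne) ≤ a ℓ := hSmono i ℓ hi _ hS hge
    have hb : b ⟨k - (((L i j).max' hne : Fin n) : ℕ), hlt'⟩ ≤ b ⟨k - (ℓ : ℕ), hlt⟩ := by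
      have heq : t = ⟨k - (((L i j).max' hne : Fin n) : ℕ), hlt'⟩ := Fin.ext ht
      exact hTmono j _ (heq ▸ htT) _ hj (Nat.sub_le_sub_left hge k)
    exact add_le_add ha hb
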